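/- Let A be an m×n real matrix with rank ρ, with SVD A = S Σ Tᵀ, and let T_{ρ,A} denote the n×ρ matrix of the first ρ right singular vectors. Let V be a ρ×ρ₊ real matrix with orthonormal rows (ρ₊ ≥ ρ), let Q be an n×ρ₊ matrix, and write Δ = Q − T_{ρ,A}·V. Then ‖A·Q·Qᵀ − A‖ ≤ ((2 + ‖Δ‖)·‖Δ‖)·‖A‖ + σ_{ρ+1}(A), where σ_{ρ+1}(A) denotes the (ρ+1)-st singular value of A (equal to 0 if ρ+1 > min(m,n)) and ‖·‖ is the spectral norm. -/

import Mathlib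

open Matrix
open scoped Matrix.Norms.L2Operator

/-- The `j`-th largest singular value (1-indexed) of a real matrix, characterized by
Eckart–Young: `σ_j(A) = inf { ‖A - B‖ : rank B < j }` (spectral norm).
In particular `σ_1(A) = ‖A‖` and `σ_j(A) = 0` for `j > rank A`. -/
noncomputable def singVal {m n : Type*} [Fintype m] [Fintype n] [DecidableEq n]
    (A : Matrix m n ℝ) (j : ℕ) : ℝ :=
  sInf ((fun B : Matrix m n ℝ => ‖A - B‖) '' {B | B.rank < j})

lemma singVal_nonneg {m n : Type*} [Fintype m] [Fintype n] [DecidableEq n]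
    (A : Matrix m n ℝ) (j : ℕ) : 0 ≤ singVal A j := by
  apply Real.sInf_nonneg
  rintro x ⟨B, -, rfl⟩
  positivity

lemma singVal_eq_zero_of_rank_lt {m n : Type*} [Fintype m] [Fintype n] [DecidableEq n]
    (A : Matrix m n ℝ) (j : ℕ) (h : A.rank < j) : singVal A j = 0 := by
  refine le_antisymm ?_ (singVal_nonneg A j)
  apply csInf_le
  · exact ⟨0, by rintro x ⟨B, -, rfl⟩; positivity⟩
  · exact ⟨A, h, by simp⟩

lemma norm_one_le {k : ℕ} : ‖(1 : Matrix (Fin k) (Fin k) ℝ)‖ ≤ 1 := by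
  have h := Matrix.l2_opNorm_conjTranspose_mul_self (1 : Matrix (Fin k) (Fin k) ℝ)
  simp only [Matrix.conjTranspose_one, Matrix.one_mul] at h
  nlinarith [norm_nonneg (1 : Matrix (Fin k) (Fin k) ℝ)]

lemma my_norm_transpose {a b : ℕ} (M : Matrix (Fin a) (Fin b) ℝ) : ‖Mᵀ‖ = ‖M‖ := by
  have : Mᵀ = Mᴴ := by ext i j; simp [Matrix.conjTranspose_apply]
  rw [this, Matrix.l2_opNorm_conjTranspose]

lemma norm_le_one_of_orth {a b : ℕ} (M : Matrix (Fin a) (Fin b) ℝ) (h : Mᵀ * M = 1) :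
    ‖M‖ ≤ 1 := by
  have hct : Mᴴ = Mᵀ := by ext i j; simp [Matrix.conjTranspose_apply]
  have h2 := Matrix.l2_opNorm_conjTranspose_mul_self M
  rw [hct, h] at h2
  nlinarith [norm_nonneg M, norm_one_le (k := b)]

theorem stmt0 {m n ρ ρp : ℕ} (hρn : ρ ≤ n) (hρp : ρ ≤ ρp)
    (A : Matrix (Fin m) (Fin n) ℝ) (S : Matrix (Fin m) (Fin m) ℝ)
    (T : Matrix (Fin n) (Fin n) ℝ) (Sig : Matrix (Fin m) (Fin n) ℝ)
    (hrank : A.rank = ρ)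
    (hS : Sᵀ * S = 1) (hT : Tᵀ * T = 1)
    (hSig : ∀ i j, Sig i j = if (i : ℕ) = (j : ℕ) then singVal A ((i : ℕ) + 1) else 0)
    (hA : A = S * Sig * Tᵀ)
    (V : Matrix (Fin ρ) (Fin ρp) ℝ) (hV : V * Vᵀ = 1)
    (Q : Matrix (Fin n) (Fin ρp) ℝ)
    (Tρ : Matrix (Fin n) (Fin ρ) ℝ)
    (hTρ : Tρ = T.submatrix id (Fin.castLE hρn))
    (Δ : Matrix (Fin n) (Fin ρp) ℝ) (hΔ : Δ = Q - Tρ * V) :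
    ‖A * Q * Qᵀ - A‖ ≤ (2 + ‖Δ‖) * ‖Δ‖ * ‖A‖ + singVal A (ρ + 1) := by
  -- Sig entries vanish beyond rank
  have hsv0 : ∀ j : ℕ, ρ < j → singVal A j = 0 := fun j hj =>
    singVal_eq_zero_of_rank_lt A j (hrank ▸ hj)
  -- key: A * Tρ * Tρᵀ = A
  have hATT : A * Tρ * Tρᵀ = A := by
    have hSigT : Sig * Tᵀ * Tρ * Tρᵀ = Sig * Tᵀ := by
      -- first: Sig * Tᵀ * Tρ = Sig.submatrix id (castLE)
      have hTtT : Tᵀ * Tρ = (1 : Matrix (Fin n) (Fin n) ℝ).submatrix id (Fin.castLE hρn) := by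
        rw [hTρ, ← hT]
        ext i j
        simp [Matrix.mul_apply, Matrix.submatrix_apply]
      have h1 : Sig * Tᵀ * Tρ = Sig.submatrix id (Fin.castLE hρn) := by
        rw [Matrix.mul_assoc, hTtT]
        ext a j
        rw [Matrix.mul_apply]
        rw [Finset.sum_eq_single (Fin.castLE hρn j)]
        · have h1 : (1 : Matrix (Fin n) (Fin n) ℝ) (id (Fin.castLE hρn j)) (Fin.castLE hρn j) = 1 :=
            Matrix.one_apply_eq _
          simp [Matrix.submatrix_apply, h1]
        · intro k _ hk
          have : (1 : Matrix (Fin n) (Fin n) ℝ).submatrix id (Fin.castLE hρn) k j = 0 := by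
            simp [Matrix.submatrix_apply, Matrix.one_apply, hk]
          rw [this, mul_zero]
        · simp
      rw [h1]
      ext a b
      rw [Matrix.mul_apply, Matrix.mul_apply]
      set f : ℕ → ℝ := fun k => if h : k < n then Sig a ⟨k, h⟩ * T b ⟨k, h⟩ else 0 with hf
      have hLHS : ∑ j : Fin ρ, Sig.submatrix id (Fin.castLE hρn) a j * Tρᵀ j b
          = ∑ i ∈ Finset.range ρ, f i := by
        rw [← Fin.sum_univ_eq_sum_range]
        apply Finset.sum_congr rfl
        intro j _
        have hj : (j : ℕ) < n := lt_of_lt_of_le j.isLt hρn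
        simp only [hf, hj, dif_pos, Matrix.submatrix_apply, Matrix.transpose_apply, hTρ, id_eq]
        rfl
      have hRHS : ∑ k : Fin n, Sig a k * Tᵀ k b = ∑ i ∈ Finset.range n, f i := by
        rw [← Fin.sum_univ_eq_sum_range]
        apply Finset.sum_congr rfl
        intro k _
        simp only [hf, k.isLt, dif_pos, Matrix.transpose_apply, Fin.eta]
      rw [hLHS, hRHS]
      apply Finset.sum_subset (Finset.range_subset_range.mpr hρn)
      intro i hi hni
      simp only [Finset.mem_range] at hi hni
      simp only [hf, hi, dif_pos]
      have hz : Sig a ⟨i, hi⟩ = 0 := by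
        rw [hSig a ⟨i, hi⟩]
        by_cases h : (a : ℕ) = i
        · simp only [h]
          rw [if_true]
          exact hsv0 _ (by omega)
        · exact if_neg h
      rw [hz, zero_mul]
    calc A * Tρ * Tρᵀ = S * (Sig * Tᵀ * Tρ * Tρᵀ) := by
          rw [hA]; simp only [Matrix.mul_assoc]
      _ = S * (Sig * Tᵀ) := by rw [hSigT]
      _ = A := by rw [hA, Matrix.mul_assoc]
  -- decomposition
  have hQ : Q = Tρ * V + Δ := by rw [hΔ]; abel
  have hdecomp : A * Q * Qᵀ - A
      = A * Δ * (Vᵀ * Tρᵀ) + A * Tρ * V * Δᵀ + A * Δ * Δᵀ := by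
    have hkey : A * Tρ * V * (Vᵀ * Tρᵀ) = A := by
      rw [Matrix.mul_assoc (A * Tρ) V, ← Matrix.mul_assoc V Vᵀ Tρᵀ, hV, Matrix.one_mul, hATT]
    rw [hQ]
    simp only [Matrix.transpose_add, Matrix.transpose_mul, Matrix.mul_add, Matrix.add_mul]
    rw [← Matrix.mul_assoc A Tρ V, hkey]
    abel
  -- norm bounds
  have hVt : ‖Vᵀ‖ ≤ 1 := by
    apply norm_le_one_of_orth
    simpa using hV
  have hTρ1 : ‖Tρ‖ ≤ 1 := by
    apply norm_le_one_of_orth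
    rw [hTρ]
    ext i j
    rw [Matrix.mul_apply]
    have := congrFun (congrFun hT (Fin.castLE hρn i)) (Fin.castLE hρn j)
    rw [Matrix.mul_apply] at this
    simpa [Matrix.submatrix_apply, Matrix.one_apply, Fin.castLE_inj] using this
  have hTρt : ‖Tρᵀ‖ ≤ 1 := by rw [my_norm_transpose]; exact hTρ1
  have hΔt : ‖Δᵀ‖ = ‖Δ‖ := my_norm_transpose Δ
  have b1 : ‖A * Δ * (Vᵀ * Tρᵀ)‖ ≤ ‖A‖ * ‖Δ‖ := by
    calc ‖A * Δ * (Vᵀ * Tρᵀ)‖ ≤ ‖A * Δ‖ * ‖Vᵀ * Tρᵀ‖ := Matrix.l2_opNorm_mul _ _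
      _ ≤ (‖A‖ * ‖Δ‖) * (‖Vᵀ‖ * ‖Tρᵀ‖) := by
          apply mul_le_mul (Matrix.l2_opNorm_mul _ _) (Matrix.l2_opNorm_mul _ _)
            (norm_nonneg _) (by positivity)
      _ ≤ (‖A‖ * ‖Δ‖) * 1 := by
          apply mul_le_mul_of_nonneg_left _ (by positivity)
          calc ‖Vᵀ‖ * ‖Tρᵀ‖ ≤ 1 * 1 := mul_le_mul hVt hTρt (norm_nonneg _) zero_le_one
            _ = 1 := one_mul 1
      _ = ‖A‖ * ‖Δ‖ := mul_one _
  have b2 : ‖A * Tρ * V * Δᵀ‖ ≤ ‖A‖ * ‖Δ‖ := by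
    have hV1 : ‖V‖ ≤ 1 := by rw [← my_norm_transpose]; exact hVt
    calc ‖A * Tρ * V * Δᵀ‖ ≤ ‖A * Tρ * V‖ * ‖Δᵀ‖ := Matrix.l2_opNorm_mul _ _
      _ ≤ (‖A * Tρ‖ * ‖V‖) * ‖Δᵀ‖ := by
          apply mul_le_mul_of_nonneg_right (Matrix.l2_opNorm_mul _ _) (norm_nonneg _)
      _ ≤ ((‖A‖ * ‖Tρ‖) * ‖V‖) * ‖Δᵀ‖ := by
          apply mul_le_mul_of_nonneg_right (mul_le_mul_of_nonneg_right (Matrix.l2_opNorm_mul _ _)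
            (norm_nonneg _)) (norm_nonneg _)
      _ ≤ ((‖A‖ * 1) * 1) * ‖Δ‖ := by
          rw [hΔt]
          apply mul_le_mul_of_nonneg_right _ (norm_nonneg _)
          apply mul_le_mul (mul_le_mul_of_nonneg_left hTρ1 (norm_nonneg _)) hV1 (norm_nonneg _)
            (by positivity)
      _ = ‖A‖ * ‖Δ‖ := by ring
  have b3 : ‖A * Δ * Δᵀ‖ ≤ ‖A‖ * ‖Δ‖ * ‖Δ‖ := by
    calc ‖A * Δ * Δᵀ‖ ≤ ‖A * Δ‖ * ‖Δᵀ‖ := Matrix.l2_opNorm_mul _ _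
      _ ≤ (‖A‖ * ‖Δ‖) * ‖Δ‖ := by
          rw [hΔt]
          exact mul_le_mul_of_nonneg_right (Matrix.l2_opNorm_mul _ _) (norm_nonneg _)
  have hsv : 0 ≤ singVal A (ρ + 1) := singVal_nonneg A _
  rw [hdecomp]
  calc ‖A * Δ * (Vᵀ * Tρᵀ) + A * Tρ * V * Δᵀ + A * Δ * Δᵀ‖
      ≤ ‖A * Δ * (Vᵀ * Tρᵀ) + A * Tρ * V * Δᵀ‖ + ‖A * Δ * Δᵀ‖ := norm_add_le _ _
    _ ≤ (‖A * Δ * (Vᵀ * Tρᵀ)‖ + ‖A * Tρ * V * Δᵀ‖) + ‖A * Δ * Δᵀ‖ := by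
        exact add_le_add_left (norm_add_le _ _) _
    _ ≤ (‖A‖ * ‖Δ‖ + ‖A‖ * ‖Δ‖) + ‖A‖ * ‖Δ‖ * ‖Δ‖ := by
        exact add_le_add (add_le_add b1 b2) b3
    _ ≤ (2 + ‖Δ‖) * ‖Δ‖ * ‖A‖ + singVal A (ρ + 1) := by nlinarith
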